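/- Let d ≥ 1, δ, r > 0, let M be a real symmetric d×d matrix with quadratic form f(x) = (1/2)·xᵀMx, and let S ⊆ ℝ^d be a nonempty closed linear cone. Assume 0 is not a (δ,r)-boundary QCSP, i.e. f(x) ≥ -δ for every x ∈ ∂S with ‖x‖ ≤ r. Then the following are equivalent: (1) there exists x ∈ S with ‖x‖ ≤ r and f(x) < -δ; (2) there exists e ∈ int S with ‖e‖ = r, f(e) < -δ, and e is an eigenvector of M (i.e. Me = λe for some λ ∈ ℝ). -/

import Mathlib

open scoped RealInnerProductSpace

/-- For a quadratic form `f(x) = (1/2) xᵀ M x` with symmetric `M`, a nonempty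
closed linear cone `S`, if `0` is not a `(δ, r)`-boundary QCSP (i.e. `f ≥ -δ` on
`∂S ∩ B(r)`), then `0` is a `(δ, r)`-QCSP iff there is an eigenvector `e` of `M`
in `int S` with `‖e‖ = r` and `f(e) < -δ`. -/
theorem stmt0 (d : ℕ) (hd : 1 ≤ d) (δ r : ℝ) (hδ : 0 < δ) (hr : 0 < r)
    (M : Matrix (Fin d) (Fin d) ℝ) (hM : M.IsSymm)
    (f : EuclideanSpace ℝ (Fin d) → ℝ)
    (hf : ∀ x : EuclideanSpace ℝ (Fin d),
      f x = (1 / 2) * ⟪x, (WithLp.toLp 2 (M.mulVec x) : EuclideanSpace ℝ (Fin d))⟫)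
    (S : Set (EuclideanSpace ℝ (Fin d))) (hSne : S.Nonempty) (hScl : IsClosed S)
    (hScone : ∀ x ∈ S, ∀ α : ℝ, 0 ≤ α → α • x ∈ S)
    (hbd : ∀ x ∈ frontier S, ‖x‖ ≤ r → f x ≥ -δ) :
    (∃ x ∈ S, ‖x‖ ≤ r ∧ f x < -δ) ↔
      (∃ e ∈ interior S, ‖e‖ = r ∧ f e < -δ ∧ ∃ μ : ℝ, M.mulVec e = μ • e) := by
  constructor
  · rintro ⟨x, hxS, hxr, hxf⟩
    -- set up the continuous linear operator T
    let T : EuclideanSpace ℝ (Fin d) →L[ℝ] EuclideanSpace ℝ (Fin d) :=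
      LinearMap.toContinuousLinearMap (Matrix.toEuclideanLin M)
    have hTapp : ∀ v : EuclideanSpace ℝ (Fin d), T v = (WithLp.toLp 2 (M.mulVec v) : EuclideanSpace ℝ (Fin d)) :=
      fun v => rfl
    have hMherm : M.IsHermitian := by
      rw [Matrix.IsHermitian, Matrix.conjTranspose_eq_transpose_of_trivial]; exact hM
    have hTsa : IsSelfAdjoint T := by
      apply LinearMap.IsSymmetric.isSelfAdjoint
      exact Matrix.isHermitian_iff_isSymmetric.mp hMherm
    -- f is continuous
    have hfc : Continuous f := by
      have : Continuous fun v : EuclideanSpace ℝ (Fin d) => (1 / 2 : ℝ) * ⟪v, T v⟫ := by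
        exact (continuous_const.mul ((continuous_id.inner (T.continuous))))
      exact this.congr fun v => by rw [hf v]; rfl
    -- compact set
    have hK : IsCompact (S ∩ Metric.closedBall (0 : EuclideanSpace ℝ (Fin d)) r) :=
      (isCompact_closedBall (0 : EuclideanSpace ℝ (Fin d)) r).inter_left hScl
    have hKne : (S ∩ Metric.closedBall (0 : EuclideanSpace ℝ (Fin d)) r).Nonempty :=
      ⟨x, hxS, by simpa [Metric.mem_closedBall, dist_eq_norm] using hxr⟩
    obtain ⟨e, heK, hemin⟩ := hK.exists_isMinOn hKne hfc.continuousOn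
    obtain ⟨heS, her⟩ := heK
    have her' : ‖e‖ ≤ r := by simpa [Metric.mem_closedBall, dist_eq_norm] using her
    have hef : f e < -δ :=
      lt_of_le_of_lt (hemin ⟨hxS, by simpa [Metric.mem_closedBall, dist_eq_norm] using hxr⟩) hxf
    -- e in interior
    have heInt : e ∈ interior S := by
      by_contra h
      have : e ∈ frontier S := by
        rw [frontier, hScl.closure_eq]; exact ⟨heS, h⟩
      exact absurd (hbd e this her') (not_le.mpr hef)
    -- scaling property of f
    have hscal : ∀ (t : ℝ) (v : EuclideanSpace ℝ (Fin d)), f (t • v) = t ^ 2 * f v := by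
      intro t v
      rw [hf, hf]
      have : (WithLp.toLp 2 (M.mulVec (t • v).ofLp) : EuclideanSpace ℝ (Fin d)) = t • (WithLp.toLp 2 (M.mulVec v) : EuclideanSpace ℝ (Fin d)) := by
        have := Matrix.mulVec_smul M t (v : Fin d → ℝ)
        ext i
        simpa using congrFun this i
      rw [this, inner_smul_left, inner_smul_right]
      simp only [starRingEnd_apply, star_trivial]
      ring
    -- e ≠ 0
    have hene : e ≠ 0 := by
      intro h
      rw [h] at hef
      have : f (0 : EuclideanSpace ℝ (Fin d)) = 0 := by
        have := hscal 0 0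
        simpa using this
      rw [this] at hef; linarith
    -- ‖e‖ = r
    have hner : ‖e‖ = r := by
      by_contra h
      have hlt : ‖e‖ < r := lt_of_le_of_ne her' h
      have hpos : 0 < ‖e‖ := norm_pos_iff.mpr hene
      set t : ℝ := r / ‖e‖ with ht
      have ht1 : 1 < t := (one_lt_div hpos).mpr hlt
      have hte : t • e ∈ S := hScone e heS t (by positivity)
      have hten : ‖t • e‖ = r := by
        rw [norm_smul, Real.norm_of_nonneg (by positivity), ht]
        field_simp
      have hmem : t • e ∈ S ∩ Metric.closedBall (0 : EuclideanSpace ℝ (Fin d)) r :=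
        ⟨hte, by simp [Metric.mem_closedBall, dist_eq_norm, hten]⟩
      have : f e ≤ f (t • e) := hemin hmem
      rw [hscal] at this
      have ht2 : 1 < t ^ 2 := by nlinarith
      have hfe0 : f e < 0 := by linarith
      nlinarith [mul_pos (sub_pos.mpr ht2) (neg_pos.mpr hfe0)]
    -- local min on sphere
    have hloc : IsLocalMinOn T.reApplyInnerSelf (Metric.sphere (0 : EuclideanSpace ℝ (Fin d)) ‖e‖) e := by
      have hnhds : interior S ∈ nhds e := isOpen_interior.mem_nhds heInt
      have hev : ∀ᶠ y in nhdsWithin e (Metric.sphere (0 : EuclideanSpace ℝ (Fin d)) ‖e‖),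
          T.reApplyInnerSelf e ≤ T.reApplyInnerSelf y := by
        filter_upwards [nhdsWithin_le_nhds hnhds, self_mem_nhdsWithin] with y hyInt hySph
        have hyS : y ∈ S := interior_subset hyInt
        have hyr : ‖y‖ ≤ r := by
          have : ‖y‖ = ‖e‖ := by simpa [Metric.mem_sphere, dist_eq_norm] using hySph
          rw [this, hner]
        have hfey : f e ≤ f y := hemin ⟨hyS, by simpa [Metric.mem_closedBall, dist_eq_norm] using hyr⟩
        have h2 : ∀ v : EuclideanSpace ℝ (Fin d), T.reApplyInnerSelf v = 2 * f v := by
          intro v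
          rw [hf v]
          simp only [ContinuousLinearMap.reApplyInnerSelf]
          rw [real_inner_comm]
          ring_nf
          rfl
        rw [h2, h2]
        linarith
      exact hev
    have heig := hTsa.hasEigenvector_of_isLocalExtrOn hene (Or.inl hloc)
    refine ⟨e, heInt, hner, hef, T.rayleighQuotient e, ?_⟩
    have := heig.apply_eq_smul
    have hTe : (WithLp.toLp 2 (M.mulVec e) : EuclideanSpace ℝ (Fin d)) = T.rayleighQuotient e • e := by
      rw [← hTapp]; exact this
    ext i
    simpa using congrFun (congrArg WithLp.ofLp hTe) i
  · rintro ⟨e, heInt, hner, hef, _⟩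
    exact ⟨e, interior_subset heInt, le_of_eq hner, hef⟩
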